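/- For μ₁, μ₂ ∈ ℝ, the KL divergence between the [0,∞)-truncated normals TN(μ₁,1;1) and TN(μ₂,1;1) equals log Φ(μ₂) − log Φ(μ₁) + (μ₁−μ₂)·φ(μ₁)/Φ(μ₁) + (1/2)(μ₁−μ₂)². -/

import Mathlib

open MeasureTheory Set Real Filter
/-- standard normal pdf -/
noncomputable def gaussPdf (x : ℝ) : ℝ :=
  (Real.sqrt (2 * Real.pi))⁻¹ * Real.exp (-x ^ 2 / 2)

/-- standard normal cdf -/
noncomputable def gaussCdf (x : ℝ) : ℝ := ∫ t in Set.Iic x, gaussPdf t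

/-- density of the normal distribution `N(μ,1)` truncated to `[0,∞)` -/
noncomputable def tnPdf (μ x : ℝ) : ℝ :=
  if 0 ≤ x then Real.exp (-(x - μ) ^ 2 / 2) / (Real.sqrt (2 * Real.pi) * gaussCdf μ) else 0

/-- KL divergence `KL(TN(μ₁,1;1) ‖ TN(μ₂,1;1))` as the integral of the log density ratio -/
noncomputable def klTN (μ₁ μ₂ : ℝ) : ℝ :=
  ∫ x in Set.Ici (0 : ℝ), Real.log (tnPdf μ₁ x / tnPdf μ₂ x) * tnPdf μ₁ x


-- basic integrability
lemma exp_sq_integrable : Integrable (fun x : ℝ => Real.exp (-x ^ 2 / 2)) := by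
  have := integrable_exp_neg_mul_sq (by norm_num : (0:ℝ) < 1/2)
  convert this using 2 with x
  ring_nf

lemma exp_sq_shift_integrable (μ : ℝ) :
    Integrable (fun x : ℝ => Real.exp (-(x - μ) ^ 2 / 2)) := by
  have h := (MeasureTheory.measurePreserving_sub_right (volume : Measure ℝ) μ)
  have e : MeasurableEmbedding (fun x : ℝ => x - μ) :=
    (Homeomorph.subRight μ).measurableEmbedding
  exact (h.integrable_comp_emb e).mpr exp_sq_integrable

lemma mul_exp_sq_integrable : Integrable (fun x : ℝ => x * Real.exp (-x ^ 2 / 2)) := by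
  have := integrable_mul_exp_neg_mul_sq (by norm_num : (0:ℝ) < 1/2)
  convert this using 2 with x
  ring_nf

lemma mul_exp_sq_shift_integrable (μ : ℝ) :
    Integrable (fun x : ℝ => x * Real.exp (-(x - μ) ^ 2 / 2)) := by
  have h := (MeasureTheory.measurePreserving_sub_right (volume : Measure ℝ) μ)
  have e : MeasurableEmbedding (fun x : ℝ => x - μ) :=
    (Homeomorph.subRight μ).measurableEmbedding
  have h2 : Integrable ((fun x : ℝ => x * Real.exp (-x ^ 2 / 2) + μ * Real.exp (-x ^ 2 / 2))
      ∘ (fun x : ℝ => x - μ)) :=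
    (h.integrable_comp_emb e).mpr (mul_exp_sq_integrable.add (exp_sq_integrable.const_mul μ))
  convert h2 using 2 with x
  simp [Function.comp]
  ring

lemma setIntegral_comp_sub (f : ℝ → ℝ) (a μ : ℝ) :
    ∫ x in Ici a, f (x - μ) = ∫ x in Ici (a - μ), f x := by
  have e : MeasurableEmbedding (fun x : ℝ => x - μ) :=
    (Homeomorph.subRight μ).measurableEmbedding
  have h := e.setIntegral_map (μ := volume) f (Ici (a - μ))
  rw [(MeasureTheory.measurePreserving_sub_right (volume : Measure ℝ) μ).map_eq] at h
  have hp : (fun x : ℝ => x - μ) ⁻¹' Ici (a - μ) = Ici a := by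
    ext x; simp [sub_le_sub_iff_right]
  rw [hp] at h
  exact h.symm

lemma sqrt_two_pi_pos : 0 < Real.sqrt (2 * Real.pi) :=
  Real.sqrt_pos.mpr (by positivity)

lemma gaussCdf_eq (μ : ℝ) :
    gaussCdf μ = (Real.sqrt (2 * Real.pi))⁻¹ * ∫ t in Iic μ, Real.exp (-t ^ 2 / 2) := by
  unfold gaussCdf gaussPdf
  rw [MeasureTheory.integral_const_mul]

lemma Ihalf (μ : ℝ) :
    ∫ y in Ici (-μ), Real.exp (-y ^ 2 / 2) = Real.sqrt (2 * Real.pi) * gaussCdf μ := by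
  rw [integral_Ici_eq_integral_Ioi]
  have h : ∫ y in Ioi (-μ), Real.exp (-y ^ 2 / 2)
      = ∫ y in Ioi (-μ), (fun t => Real.exp (-t ^ 2 / 2)) (-y) := by
    apply setIntegral_congr_fun measurableSet_Ioi
    intro x _
    simp [neg_pow]
  rw [h]
  have h2 := integral_comp_neg_Ioi (-μ) (fun t => Real.exp (-t ^ 2 / 2))
  rw [neg_neg] at h2
  rw [h2, gaussCdf_eq, ← mul_assoc,
    mul_inv_cancel₀ (ne_of_gt sqrt_two_pi_pos), one_mul]

lemma I0 (μ : ℝ) :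
    ∫ x in Ici (0:ℝ), Real.exp (-(x - μ) ^ 2 / 2) = Real.sqrt (2 * Real.pi) * gaussCdf μ := by
  have := setIntegral_comp_sub (fun t => Real.exp (-t ^ 2 / 2)) 0 μ
  simp only [zero_sub] at this
  rw [this, Ihalf]

lemma Jlem (μ : ℝ) :
    ∫ y in Ici (-μ), y * Real.exp (-y ^ 2 / 2) = Real.exp (-μ ^ 2 / 2) := by
  rw [integral_Ici_eq_integral_Ioi]
  have hderiv : ∀ x ∈ Ici (-μ), HasDerivAt (fun y : ℝ => -Real.exp (-y ^ 2 / 2))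
      (x * Real.exp (-x ^ 2 / 2)) x := by
    intro x _
    have h1 : HasDerivAt (fun y : ℝ => -y ^ 2 / 2) (-x) x := by
      have := ((hasDerivAt_pow 2 x).neg).div_const 2
      exact this.congr_deriv (by rw [show (2:ℕ) - 1 = 1 from rfl]; push_cast; ring)
    have := (h1.exp).neg
    exact this.congr_deriv (by ring)
  have hint : IntegrableOn (fun x : ℝ => x * Real.exp (-x ^ 2 / 2)) (Ioi (-μ)) :=
    mul_exp_sq_integrable.integrableOn
  have htend : Tendsto (fun y : ℝ => -Real.exp (-y ^ 2 / 2)) atTop (nhds 0) := by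
    rw [← neg_zero]
    apply Tendsto.neg
    apply Real.tendsto_exp_atBot.comp
    apply Tendsto.atBot_div_const (by norm_num : (0:ℝ) < 2)
    exact (tendsto_neg_atTop_atBot.comp (tendsto_pow_atTop two_ne_zero))
  have := integral_Ioi_of_hasDerivAt_of_tendsto' hderiv hint htend
  rw [this]
  simp [neg_pow]

lemma I1 (μ : ℝ) :
    ∫ x in Ici (0:ℝ), x * Real.exp (-(x - μ) ^ 2 / 2)
      = μ * (Real.sqrt (2 * Real.pi) * gaussCdf μ) + Real.exp (-μ ^ 2 / 2) := by
  have key := setIntegral_comp_sub (fun y => (y + μ) * Real.exp (-y ^ 2 / 2)) 0 μ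
  simp only [sub_add_cancel, zero_sub] at key
  rw [key]
  have hadd : ∫ y in Ici (-μ), (y + μ) * Real.exp (-y ^ 2 / 2)
      = (∫ y in Ici (-μ), y * Real.exp (-y ^ 2 / 2))
        + ∫ y in Ici (-μ), μ * Real.exp (-y ^ 2 / 2) := by
    rw [← integral_add mul_exp_sq_integrable.integrableOn
      (exp_sq_integrable.const_mul μ).integrableOn]
    congr 1
    ext y
    ring
  rw [hadd, Jlem, MeasureTheory.integral_const_mul, Ihalf]
  ring

lemma gaussCdf_pos (μ : ℝ) : 0 < gaussCdf μ := by
  have heq : gaussCdf μ = (Real.sqrt (2 * Real.pi))⁻¹ * ∫ t in Iic μ, Real.exp (-t ^ 2 / 2) :=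
    gaussCdf_eq μ
  rw [heq]
  apply mul_pos (inv_pos.mpr sqrt_two_pi_pos)
  rw [setIntegral_pos_iff_support_of_nonneg_ae]
  · have hs : Function.support (fun t : ℝ => Real.exp (-t ^ 2 / 2)) = univ := by
      ext t; simp [Real.exp_ne_zero]
    rw [hs, univ_inter, Real.volume_Iic]
    exact ENNReal.zero_lt_top
  · filter_upwards with t using Real.exp_nonneg _
  · exact exp_sq_integrable.integrableOn

theorem stmt3 (μ₁ μ₂ : ℝ) :
    klTN μ₁ μ₂ =
      Real.log (gaussCdf μ₂) - Real.log (gaussCdf μ₁)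
        + (μ₁ - μ₂) * gaussPdf μ₁ / gaussCdf μ₁ + (1 / 2) * (μ₁ - μ₂) ^ 2 := by
  set c := Real.sqrt (2 * Real.pi) with hc_def
  have hc : 0 < c := sqrt_two_pi_pos
  have hΦ₁ : 0 < gaussCdf μ₁ := gaussCdf_pos μ₁
  have hΦ₂ : 0 < gaussCdf μ₂ := gaussCdf_pos μ₂
  have hd₁ : 0 < c * gaussCdf μ₁ := mul_pos hc hΦ₁
  have hd₂ : 0 < c * gaussCdf μ₂ := mul_pos hc hΦ₂
  set B := (μ₂ ^ 2 - μ₁ ^ 2) / 2 + Real.log (gaussCdf μ₂) - Real.log (gaussCdf μ₁) with hB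
  have hcong : ∀ x ∈ Ici (0:ℝ),
      Real.log (tnPdf μ₁ x / tnPdf μ₂ x) * tnPdf μ₁ x
        = (μ₁ - μ₂) * (x * Real.exp (-(x - μ₁) ^ 2 / 2)) * (c * gaussCdf μ₁)⁻¹
          + B * (Real.exp (-(x - μ₁) ^ 2 / 2) * (c * gaussCdf μ₁)⁻¹) := by
    intro x hx
    have hx' : (0:ℝ) ≤ x := hx
    have h1 : tnPdf μ₁ x = Real.exp (-(x - μ₁) ^ 2 / 2) / (c * gaussCdf μ₁) := by
      simp [tnPdf, if_pos hx', hc_def]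
    have h2 : tnPdf μ₂ x = Real.exp (-(x - μ₂) ^ 2 / 2) / (c * gaussCdf μ₂) := by
      simp [tnPdf, if_pos hx', hc_def]
    have hratio : tnPdf μ₁ x / tnPdf μ₂ x
        = Real.exp ((μ₁ - μ₂) * x + (μ₂ ^ 2 - μ₁ ^ 2) / 2) * (gaussCdf μ₂ / gaussCdf μ₁) := by
      rw [h1, h2]
      have he : Real.exp (-(x - μ₁) ^ 2 / 2)
          = Real.exp ((μ₁ - μ₂) * x + (μ₂ ^ 2 - μ₁ ^ 2) / 2) * Real.exp (-(x - μ₂) ^ 2 / 2) := by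
        rw [← Real.exp_add]; congr 1; ring
      rw [he]
      field_simp
    have hlog : Real.log (tnPdf μ₁ x / tnPdf μ₂ x) = (μ₁ - μ₂) * x + B := by
      rw [hratio, Real.log_mul (Real.exp_ne_zero _) (by positivity), Real.log_exp,
        Real.log_div (ne_of_gt hΦ₂) (ne_of_gt hΦ₁), hB]
      ring
    rw [hlog, h1]
    field_simp
  have hint1 : IntegrableOn
      (fun x : ℝ => (μ₁ - μ₂) * (x * Real.exp (-(x - μ₁) ^ 2 / 2)) * (c * gaussCdf μ₁)⁻¹)
      (Ici (0:ℝ)) :=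
    (((mul_exp_sq_shift_integrable μ₁).const_mul (μ₁ - μ₂)).mul_const _).integrableOn
  have hint2 : IntegrableOn
      (fun x : ℝ => B * (Real.exp (-(x - μ₁) ^ 2 / 2) * (c * gaussCdf μ₁)⁻¹))
      (Ici (0:ℝ)) :=
    (((exp_sq_shift_integrable μ₁).mul_const _).const_mul B).integrableOn
  have hsplit : klTN μ₁ μ₂
      = (∫ x in Ici (0:ℝ), (μ₁ - μ₂) * (x * Real.exp (-(x - μ₁) ^ 2 / 2)) * (c * gaussCdf μ₁)⁻¹)
        + ∫ x in Ici (0:ℝ), B * (Real.exp (-(x - μ₁) ^ 2 / 2) * (c * gaussCdf μ₁)⁻¹) := by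
    rw [klTN, setIntegral_congr_fun measurableSet_Ici hcong, integral_add hint1 hint2]
  rw [hsplit]
  have e1 : (∫ x in Ici (0:ℝ), (μ₁ - μ₂) * (x * Real.exp (-(x - μ₁) ^ 2 / 2))
        * (c * gaussCdf μ₁)⁻¹)
      = (μ₁ - μ₂) * (μ₁ * (c * gaussCdf μ₁) + Real.exp (-μ₁ ^ 2 / 2)) * (c * gaussCdf μ₁)⁻¹ := by
    rw [MeasureTheory.integral_mul_const, MeasureTheory.integral_const_mul, I1]
  have e2 : (∫ x in Ici (0:ℝ), B * (Real.exp (-(x - μ₁) ^ 2 / 2) * (c * gaussCdf μ₁)⁻¹))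
      = B * ((c * gaussCdf μ₁) * (c * gaussCdf μ₁)⁻¹) := by
    rw [MeasureTheory.integral_const_mul, MeasureTheory.integral_mul_const, I0]
  rw [e1, e2, mul_inv_cancel₀ (ne_of_gt hd₁), mul_one, hB]
  have hgp : gaussPdf μ₁ = c⁻¹ * Real.exp (-μ₁ ^ 2 / 2) := rfl
  rw [hgp]
  field_simp
  ring
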